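/- Let W : ℝ → ℝ be concave on [0,∞), let 0 ≤ p^s ≤ p^b, let L ∈ [0,∞) maximize z ↦ W(z) − p^b·z over [0,∞), let U ∈ [0,∞) maximize z ↦ W(z) − p^s·z over [0,∞), and suppose L ≤ U. Then the optimal one-slot trading value T(c) = sup_{z ≥ 0} (W(z) + p^s·max(c − z, 0) − p^b·max(z − c, 0)) satisfies: T(c) = W(L) − p^b·(L − c) for 0 ≤ c < L; T(c) = W(c) for L ≤ c ≤ U; and T(c) = W(U) + p^s·(c − U) for c > U. -/

import Mathlib

private lemma sup_eq_of_greatest {f : ℝ → ℝ} {t : ℝ} (z₀ : ℝ) (hz₀ : (0:ℝ) ≤ z₀)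
    (heq : f z₀ = t) (hub : ∀ z, (0:ℝ) ≤ z → f z ≤ t) :
    sSup (f '' Set.Ici (0 : ℝ)) = t := by
  apply IsGreatest.csSup_eq
  constructor
  · exact ⟨z₀, hz₀, heq⟩
  · rintro _ ⟨z, hz, rfl⟩
    exact hub z hz

private lemma conc_aux {W : ℝ → ℝ} (hW : ConcaveOn ℝ (Set.Ici (0 : ℝ)) W)
    {a b d : ℝ} (ha : 0 ≤ a) (hab : a ≤ b) (hbd : b ≤ d) (had : a < d) :
    (d - b) * W a + (b - a) * W d ≤ (d - a) * W b := by
  have hda : 0 < d - a := by linarith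
  have hne : d - a ≠ 0 := hda.ne'
  have h := hW.2 (Set.mem_Ici.mpr ha) (Set.mem_Ici.mpr (le_trans ha (hab.trans hbd)))
    (show (0:ℝ) ≤ (d - b) / (d - a) from div_nonneg (by linarith) hda.le)
    (show (0:ℝ) ≤ (b - a) / (d - a) from div_nonneg (by linarith) hda.le)
    (show (d - b) / (d - a) + (b - a) / (d - a) = 1 by field_simp [hne]; ring)
  simp only [smul_eq_mul] at h
  have hb : (d - b) / (d - a) * a + (b - a) / (d - a) * d = b := by
    field_simp
    ring
  rw [hb] at h
  have h2 := mul_le_mul_of_nonneg_right h hda.le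
  have e : ((d - b) / (d - a) * W a + (b - a) / (d - a) * W d) * (d - a)
      = (d - b) * W a + (b - a) * W d := by
    field_simp
  rw [e] at h2
  linarith

/-- Value of the optimal one-slot trading problem: with concave `W`, prices
`0 ≤ pˢ ≤ pᵇ`, buy-up-to threshold `L` and sell-down-to threshold `U` (`L ≤ U`),
the optimal one-slot trading value `T c = sup_{z ≥ 0} (W z + pˢ·(c-z)⁺ - pᵇ·(z-c)⁺)`
equals `W L - pᵇ·(L - c)` for `0 ≤ c < L`, `W c` for `L ≤ c ≤ U`, and
`W U + pˢ·(c - U)` for `c > U`. -/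
theorem plain_trading_value
    (W : ℝ → ℝ) (ps pb : ℝ) (hps : 0 ≤ ps) (hpspb : ps ≤ pb)
    (hW : ConcaveOn ℝ (Set.Ici (0 : ℝ)) W)
    (L U : ℝ) (hL : L ∈ Set.Ici (0 : ℝ)) (hU : U ∈ Set.Ici (0 : ℝ))
    (hLmax : ∀ z ∈ Set.Ici (0 : ℝ), W z - pb * z ≤ W L - pb * L)
    (hUmax : ∀ z ∈ Set.Ici (0 : ℝ), W z - ps * z ≤ W U - ps * U)
    (hLU : L ≤ U)
    (T : ℝ → ℝ)
    (hT : ∀ c, T c =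
      sSup ((fun z => W z + ps * max (c - z) 0 - pb * max (z - c) 0) '' Set.Ici (0 : ℝ))) :
    (∀ c, 0 ≤ c → c < L → T c = W L - pb * (L - c)) ∧
    (∀ c, L ≤ c → c ≤ U → T c = W c) ∧
    (∀ c, U < c → T c = W U + ps * (c - U)) := by
  have hL0 : (0:ℝ) ≤ L := hL
  have hU0 : (0:ℝ) ≤ U := hU
  refine ⟨?_, ?_, ?_⟩
  · -- case 0 ≤ c < L
    intro c hc hcL
    rw [hT c]
    apply sup_eq_of_greatest L hL0
    · show W L + ps * max (c - L) 0 - pb * max (L - c) 0 = _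
      rw [max_eq_right (by linarith), max_eq_left (by linarith)]
      ring
    · intro z hz
      have hm := hLmax z (Set.mem_Ici.mpr hz)
      rcases le_or_gt z c with hzc | hzc
      · rw [max_eq_left (by linarith), max_eq_right (by linarith)]
        have : ps * (c - z) ≤ pb * (c - z) :=
          mul_le_mul_of_nonneg_right hpspb (by linarith)
        nlinarith
      · rw [max_eq_right (by linarith), max_eq_left (by linarith)]
        nlinarith
  · -- case L ≤ c ≤ U
    intro c hLc hcU
    rw [hT c]
    have hc0 : (0:ℝ) ≤ c := le_trans hL0 hLc
    apply sup_eq_of_greatest c hc0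
    · simp
    · intro z hz
      rcases le_or_gt z c with hzc | hzc
      · rw [max_eq_left (by linarith), max_eq_right (by linarith)]
        rcases eq_or_lt_of_le hzc with rfl | hzc'
        · simp
        · have hm := hUmax z (Set.mem_Ici.mpr hz)
          have hconc := conc_aux hW hz hzc hcU (by linarith)
          have hUz : 0 < U - z := by linarith
          nlinarith [mul_le_mul_of_nonneg_left hm (by linarith : (0:ℝ) ≤ c - z)]
      · rw [max_eq_right (by linarith), max_eq_left (by linarith)]
        have hm := hLmax z (Set.mem_Ici.mpr hz)
        have hconc := conc_aux hW hL0 hLc hzc.le (by linarith)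
        nlinarith [mul_le_mul_of_nonneg_left hm (by linarith : (0:ℝ) ≤ z - c)]
  · -- case U < c
    intro c hUc
    rw [hT c]
    apply sup_eq_of_greatest U hU0
    · rw [max_eq_left (by linarith), max_eq_right (by linarith)]
      ring
    · intro z hz
      have hm := hUmax z (Set.mem_Ici.mpr hz)
      rcases le_or_gt z c with hzc | hzc
      · rw [max_eq_left (by linarith), max_eq_right (by linarith)]
        nlinarith
      · rw [max_eq_right (by linarith), max_eq_left (by linarith)]
        have : ps * (z - c) ≤ pb * (z - c) :=
          mul_le_mul_of_nonneg_right hpspb (by linarith)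
        nlinarith
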